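/- For all real x > 0 and y with 0 < y < 1, ((xy coth(xy) - 1)(x coth(x) - 1)) / (coth(x) - y coth(xy)) < (y^2 / (4(1 - y^2))) (sinh(2x) - 2x). -/

import Mathlib

noncomputable def coth (x : ℝ) : ℝ := Real.cosh x / Real.sinh x

namespace CothAux

open Real

/-- quartic polynomial helper -/
def K (a b c d e s : ℝ) : ℝ := a + b*s + c*s^2 + d*s^3 + e*s^4

lemma K_hda (a b c d e t : ℝ) :
    HasDerivAt (fun s => K a b c d e s) (K b (2*c) (3*d) (4*e) 0 t) t := by
  have h : HasDerivAt (fun s : ℝ => a + b*s + c*s^2 + d*s^3 + e*s^4)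
      (0 + b*1 + c*((2:ℕ)*t^1) + d*((3:ℕ)*t^2) + e*((4:ℕ)*t^3)) t := by
    exact ((((hasDerivAt_const t a).add ((hasDerivAt_id t).const_mul b)).add
      ((hasDerivAt_pow 2 t).const_mul c)).add
      ((hasDerivAt_pow 3 t).const_mul d)).add
      ((hasDerivAt_pow 4 t).const_mul e)
  simp only [K]
  convert h using 1
  push_cast; ring

/-- derivative of the standard form P·cosh + Q·sinh + R -/
lemma G_hda (pa pb pc pd pe qa qb qc qd qe ra rb rc rd re t : ℝ) :
    HasDerivAt (fun s => K pa pb pc pd pe s * Real.cosh s + K qa qb qc qd qe s * Real.sinh s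
        + K ra rb rc rd re s)
      (K (pb+qa) (2*pc+qb) (3*pd+qc) (4*pe+qd) qe t * Real.cosh t
        + K (qb+pa) (2*qc+pb) (3*qd+pc) (4*qe+pd) pe t * Real.sinh t
        + K rb (2*rc) (3*rd) (4*re) 0 t) t := by
  have h := (((K_hda pa pb pc pd pe t).mul (Real.hasDerivAt_cosh t)).add
    ((K_hda qa qb qc qd qe t).mul (Real.hasDerivAt_sinh t))).add (K_hda ra rb rc rd re t)
  refine h.congr_deriv ?_
  simp only [K]; ring

/-- if f 0 = 0 and f' ≥ 0 on [0,∞) then f ≥ 0 on [0,∞) -/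
lemma pos_aux {f g : ℝ → ℝ} (hf : ∀ t, HasDerivAt f (g t) t) (h0 : f 0 = 0)
    (hg : ∀ t, 0 ≤ t → 0 ≤ g t) : ∀ t, 0 ≤ t → 0 ≤ f t := by
  intro t ht
  have hmono : MonotoneOn f (Set.Ici 0) := by
    apply monotoneOn_of_deriv_nonneg (convex_Ici 0)
    · exact fun s _ => (hf s).continuousAt.continuousWithinAt
    · exact fun s _ => (hf s).differentiableAt.differentiableWithinAt
    · intro s hs
      rw [interior_Ici] at hs
      rw [(hf s).deriv]
      exact hg s hs.le
  have := hmono Set.self_mem_Ici (Set.mem_Ici.mpr ht) ht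
  linarith [h0 ▸ this]

lemma F_nonneg : ∀ s, 0 ≤ s →
    0 ≤ K (-48) 0 (-12) 0 0 s * Real.cosh s + K 0 48 0 1 0 s * Real.sinh s
        + K 48 0 (-12) 0 (-1) s := by
  -- chain of derivatives f0, ..., f8
  have h8 : ∀ s, 0 ≤ s →
      0 ≤ K 0 0 12 0 0 s * Real.cosh s + K 0 24 0 1 0 s * Real.sinh s + K 0 0 0 0 0 s := by
    intro s hs
    have hc := Real.cosh_pos s
    have hsn := Real.sinh_nonneg_iff.mpr hs
    simp only [K]
    nlinarith [sq_nonneg s, pow_nonneg hs 3]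
  have d7 : ∀ t, HasDerivAt (fun s => K 0 6 0 1 0 s * Real.cosh s + K (-6) 0 9 0 0 s * Real.sinh s + K 0 0 0 0 0 s)
      (K 0 0 12 0 0 t * Real.cosh t + K 0 24 0 1 0 t * Real.sinh t + K 0 0 0 0 0 t) t := by
    intro t; have h := G_hda 0 6 0 1 0 (-6) 0 9 0 0 0 0 0 0 0 t
    convert h using 1
    simp only [K]; push_cast; ring
  have h7 := pos_aux d7 (by norm_num [K]) h8
  have d6 : ∀ t, HasDerivAt (fun s => K 0 0 6 0 0 s * Real.cosh s + K 0 (-6) 0 1 0 s * Real.sinh s + K 0 0 0 0 0 s)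
      (K 0 6 0 1 0 t * Real.cosh t + K (-6) 0 9 0 0 t * Real.sinh t + K 0 0 0 0 0 t) t := by
    intro t; have h := G_hda 0 0 6 0 0 0 (-6) 0 1 0 0 0 0 0 0 t
    convert h using 1
    simp only [K]; push_cast; ring
  have h6 := pos_aux d6 (by norm_num [K]) h7
  have d5 : ∀ t, HasDerivAt (fun s => K 0 (-12) 0 1 0 s * Real.cosh s + K 12 0 3 0 0 s * Real.sinh s + K 0 0 0 0 0 s)
      (K 0 0 6 0 0 t * Real.cosh t + K 0 (-6) 0 1 0 t * Real.sinh t + K 0 0 0 0 0 t) t := by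
    intro t; have h := G_hda 0 (-12) 0 1 0 12 0 3 0 0 0 0 0 0 0 t
    convert h using 1
    simp only [K]; push_cast; ring
  have h5 := pos_aux d5 (by norm_num [K]) h6
  have d4 : ∀ t, HasDerivAt (fun s => K 24 0 0 0 0 s * Real.cosh s + K 0 (-12) 0 1 0 s * Real.sinh s + K (-24) 0 0 0 0 s)
      (K 0 (-12) 0 1 0 t * Real.cosh t + K 12 0 3 0 0 t * Real.sinh t + K 0 0 0 0 0 t) t := by
    intro t; have h := G_hda 24 0 0 0 0 0 (-12) 0 1 0 (-24) 0 0 0 0 t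
    convert h using 1
    simp only [K]; push_cast; ring
  have h4 := pos_aux d4 (by norm_num [K]) h5
  have d3 : ∀ t, HasDerivAt (fun s => K 0 (-6) 0 1 0 s * Real.cosh s + K 30 0 (-3) 0 0 s * Real.sinh s + K 0 (-24) 0 0 0 s)
      (K 24 0 0 0 0 t * Real.cosh t + K 0 (-12) 0 1 0 t * Real.sinh t + K (-24) 0 0 0 0 t) t := by
    intro t; have h := G_hda 0 (-6) 0 1 0 30 0 (-3) 0 0 0 (-24) 0 0 0 t
    convert h using 1
    simp only [K]; push_cast; ring
  have h3 := pos_aux d3 (by norm_num [K]) h4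
  have d2 : ∀ t, HasDerivAt (fun s => K 24 0 (-6) 0 0 s * Real.cosh s + K 0 6 0 1 0 s * Real.sinh s + K (-24) 0 (-12) 0 0 s)
      (K 0 (-6) 0 1 0 t * Real.cosh t + K 30 0 (-3) 0 0 t * Real.sinh t + K 0 (-24) 0 0 0 t) t := by
    intro t; have h := G_hda 24 0 (-6) 0 0 0 6 0 1 0 (-24) 0 (-12) 0 0 t
    convert h using 1
    simp only [K]; push_cast; ring
  have h2 := pos_aux d2 (by norm_num [K]) h3
  have d1 : ∀ t, HasDerivAt (fun s => K 0 24 0 1 0 s * Real.cosh s + K 0 0 (-9) 0 0 s * Real.sinh s + K 0 (-24) 0 (-4) 0 s)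
      (K 24 0 (-6) 0 0 t * Real.cosh t + K 0 6 0 1 0 t * Real.sinh t + K (-24) 0 (-12) 0 0 t) t := by
    intro t; have h := G_hda 0 24 0 1 0 0 0 (-9) 0 0 0 (-24) 0 (-4) 0 t
    convert h using 1
    simp only [K]; push_cast; ring
  have h1 := pos_aux d1 (by norm_num [K]) h2
  have d0 : ∀ t, HasDerivAt (fun s => K (-48) 0 (-12) 0 0 s * Real.cosh s + K 0 48 0 1 0 s * Real.sinh s + K 48 0 (-12) 0 (-1) s)
      (K 0 24 0 1 0 t * Real.cosh t + K 0 0 (-9) 0 0 t * Real.sinh t + K 0 (-24) 0 (-4) 0 t) t := by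
    intro t; have h := G_hda (-48) 0 (-12) 0 0 0 48 0 1 0 48 0 (-12) 0 (-1) t
    convert h using 1
    simp only [K]; push_cast; ring
  exact pos_aux d0 (by norm_num [K]) h1

/-- key inequality: 6 (t cosh t - sinh t)^2 ≤ t^3 (sinh t cosh t - t) for t ≥ 0 -/
lemma keyE (t : ℝ) (ht : 0 ≤ t) :
    6*(t*Real.cosh t - Real.sinh t)^2 ≤ t^3*(Real.sinh t*Real.cosh t - t) := by
  have h := F_nonneg (2*t) (by linarith)
  simp only [K] at h
  rw [Real.cosh_two_mul, Real.sinh_two_mul] at h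
  nlinarith [Real.cosh_sq_sub_sinh_sq t, h]

lemma tcs_pos (t : ℝ) (ht : 0 < t) : 0 < t * Real.cosh t - Real.sinh t := by
  have hmono : StrictMonoOn (fun s => s * Real.cosh s - Real.sinh s) (Set.Ici 0) := by
    apply strictMonoOn_of_deriv_pos (convex_Ici 0)
    · exact (Continuous.sub (continuous_id.mul Real.continuous_cosh) Real.continuous_sinh).continuousOn
    · intro s hs
      rw [interior_Ici] at hs
      have hd : HasDerivAt (fun s : ℝ => s * Real.cosh s - Real.sinh s) (s * Real.sinh s) s := by
        have h := ((hasDerivAt_id s).mul (Real.hasDerivAt_cosh s)).sub (Real.hasDerivAt_sinh s)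
        refine h.congr_deriv ?_; simp only [id_eq]; ring
      rw [hd.deriv]
      exact mul_pos hs (Real.sinh_pos_iff.mpr hs)
  have := hmono Set.self_mem_Ici (Set.mem_Ici.mpr ht.le) ht
  simpa using this

/-- sinh t > t + t^3/6 for t > 0 -/
lemma sinh_cubic (t : ℝ) (ht : 0 < t) : t + t^3/6 < Real.sinh t := by
  have hb : ∀ s : ℝ, 0 < s → 0 < Real.cosh s - 1 - s^2/2 := by
    intro s hs
    have hmono : StrictMonoOn (fun u : ℝ => Real.cosh u - 1 - u^2/2) (Set.Ici 0) := by
      apply strictMonoOn_of_deriv_pos (convex_Ici 0)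
      · exact (Real.continuous_cosh.sub continuous_const |>.sub
          ((continuous_id.pow 2).div_const 2)).continuousOn
      · intro u hu
        rw [interior_Ici] at hu
        have hd : HasDerivAt (fun u : ℝ => Real.cosh u - 1 - u^2/2) (Real.sinh u - u) u := by
          have h := ((Real.hasDerivAt_cosh u).sub (hasDerivAt_const u 1)).sub
            (((hasDerivAt_pow 2 u)).div_const 2)
          refine h.congr_deriv ?_; push_cast; ring
        rw [hd.deriv]
        have := Real.self_lt_sinh_iff.mpr hu
        linarith
    have := hmono Set.self_mem_Ici (Set.mem_Ici.mpr hs.le) hs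
    simpa using this
  have hmono : StrictMonoOn (fun u : ℝ => Real.sinh u - u - u^3/6) (Set.Ici 0) := by
    apply strictMonoOn_of_deriv_pos (convex_Ici 0)
    · exact (Real.continuous_sinh.sub continuous_id |>.sub
        ((continuous_id.pow 3).div_const 6)).continuousOn
    · intro u hu
      rw [interior_Ici] at hu
      have hd : HasDerivAt (fun u : ℝ => Real.sinh u - u - u^3/6) (Real.cosh u - 1 - u^2/2) u := by
        have h := ((Real.hasDerivAt_sinh u).sub (hasDerivAt_id u)).sub
          (((hasDerivAt_pow 3 u)).div_const 6)
        refine h.congr_deriv ?_; push_cast; ring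
      rw [hd.deriv]
      exact hb u hu
  have := hmono Set.self_mem_Ici (Set.mem_Ici.mpr ht.le) ht
  simp only [Real.sinh_zero] at this
  nlinarith [this]

/-- ψ(t) = sinh t / (t cosh t - sinh t) - 3/t² is antitone on (0,∞) -/
lemma psi_anti {u v : ℝ} (hu : 0 < u) (huv : u < v) :
    Real.sinh v/(v*Real.cosh v - Real.sinh v) - 3/v^2 ≤
      Real.sinh u/(u*Real.cosh u - Real.sinh u) - 3/u^2 := by
  set ψ : ℝ → ℝ := fun s => Real.sinh s/(s*Real.cosh s - Real.sinh s) - 3/s^2 with hψ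
  have hder : ∀ t ∈ Set.Ioi (0:ℝ), HasDerivAt ψ
      ((Real.cosh t*(t*Real.cosh t - Real.sinh t) - Real.sinh t*(t*Real.sinh t))
          /(t*Real.cosh t - Real.sinh t)^2
        - (0*t^2 - 3*((2:ℕ)*t^1))/(t^2)^2) t := by
    intro t ht
    have ht' : (0:ℝ) < t := ht
    have hD := tcs_pos t ht'
    have hden : HasDerivAt (fun s : ℝ => s * Real.cosh s - Real.sinh s) (t * Real.sinh t) t := by
      have h := ((hasDerivAt_id t).mul (Real.hasDerivAt_cosh t)).sub (Real.hasDerivAt_sinh t)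
      refine h.congr_deriv ?_; simp only [id_eq]; ring
    have h1 := (Real.hasDerivAt_sinh t).div hden hD.ne'
    have h2 := (hasDerivAt_const t (3:ℝ)).div (hasDerivAt_pow 2 t) (pow_ne_zero 2 ht'.ne')
    exact h1.sub h2
  have hanti : AntitoneOn ψ (Set.Ioi 0) := by
    apply antitoneOn_of_deriv_nonpos (convex_Ioi 0)
    · intro s hs; exact (hder s hs).continuousAt.continuousWithinAt
    · rw [interior_Ioi]; intro s hs
      exact (hder s hs).differentiableAt.differentiableWithinAt
    · rw [interior_Ioi]; intro s hs
      rw [(hder s hs).deriv]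
      have hs' : (0:ℝ) < s := hs
      have hD := tcs_pos s hs'
      have heq : (Real.cosh s*(s*Real.cosh s - Real.sinh s) - Real.sinh s*(s*Real.sinh s))
            /(s*Real.cosh s - Real.sinh s)^2 - (0*s^2 - 3*((2:ℕ)*s^1))/(s^2)^2
          = ((Real.cosh s*(s*Real.cosh s - Real.sinh s) - s*Real.sinh s^2)*s^3
              + 6*(s*Real.cosh s - Real.sinh s)^2)
            /((s*Real.cosh s - Real.sinh s)^2*s^3) := by
        rw [div_sub_div _ _ (pow_ne_zero 2 hD.ne') (pow_ne_zero 2 (pow_ne_zero 2 hs'.ne')),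
          div_eq_div_iff (mul_ne_zero (pow_ne_zero 2 hD.ne') (pow_ne_zero 2 (pow_ne_zero 2 hs'.ne')))
            (mul_ne_zero (pow_ne_zero 2 hD.ne') (pow_ne_zero 3 hs'.ne'))]
        push_cast
        ring
      rw [heq]
      apply div_nonpos_of_nonpos_of_nonneg
      · have hnum : (Real.cosh s*(s*Real.cosh s - Real.sinh s) - s*Real.sinh s^2)*s^3
              + 6*(s*Real.cosh s - Real.sinh s)^2
            = s^3*(s - Real.sinh s*Real.cosh s) + 6*(s*Real.cosh s - Real.sinh s)^2 := by
          linear_combination s^4 * (Real.cosh_sq_sub_sinh_sq s)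
        rw [hnum]
        linarith [keyE s hs'.le]
      · positivity
  exact hanti (Set.mem_Ioi.mpr hu) (Set.mem_Ioi.mpr (hu.trans huv)) huv.le

end CothAux

theorem stmt_3 (x y : ℝ) (hx : 0 < x) (hy0 : 0 < y) (hy1 : y < 1) :
    ((x * y * coth (x * y) - 1) * (x * coth x - 1)) / (coth x - y * coth (x * y)) <
      (y ^ 2 / (4 * (1 - y ^ 2))) * (Real.sinh (2 * x) - 2 * x) := by
  have hxy : 0 < x * y := mul_pos hx hy0
  have hxyx : x * y < x := by nlinarith
  set u := x * y with hu
  set su := Real.sinh u with hsu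
  set cu := Real.cosh u with hcu
  set sv := Real.sinh x with hsv
  set cv := Real.cosh x with hcv
  have hsupos : 0 < su := Real.sinh_pos_iff.mpr hxy
  have hsvpos : 0 < sv := Real.sinh_pos_iff.mpr hx
  have hDu : 0 < u * cu - su := CothAux.tcs_pos u hxy
  have hDv : 0 < x * cv - sv := CothAux.tcs_pos x hx
  -- two-point inequality from psi antitone
  have hpsi := CothAux.psi_anti hxy hxyx
  have hA : 3/u^2 - 3/x^2 ≤ su/(u*cu - su) - sv/(x*cv - sv) := by linarith
  have hB : su/(u*cu - su) - sv/(x*cv - sv)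
      = (x*(cv*su - y*cu*sv))/((u*cu - su)*(x*cv - sv)) := by
    rw [div_sub_div _ _ hDu.ne' hDv.ne']
    congr 1
    simp only [hu]; ring
  have hC : 3/u^2 - 3/x^2 = (3*(x^2 - u^2))/(u^2*x^2) := by
    field_simp
  rw [hB, hC] at hA
  have hcross : 3*(x^2 - u^2)*((u*cu - su)*(x*cv - sv))
      ≤ x*(cv*su - y*cu*sv)*(u^2*x^2) := by
    rw [div_le_div_iff₀ (by positivity) (by positivity)] at hA
    linarith
  have hE : 0 < cv*su - y*cu*sv := by
    have h1 : 0 < 3*(x^2 - u^2)*((u*cu - su)*(x*cv - sv)) :=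
      mul_pos (by nlinarith) (mul_pos hDu hDv)
    nlinarith [h1.trans_le hcross, mul_pos (mul_pos hx (pow_pos hxy 2)) (pow_pos hx 2)]
  -- rewrite goal in terms of su, cu, sv, cv
  have hcoth_u : x * y * coth (x*y) - 1 = (u*cu - su)/su := by
    simp only [coth, ← hu, ← hsu, ← hcu]; field_simp
  have hcoth_v : x * coth x - 1 = (x*cv - sv)/sv := by
    simp only [coth, ← hsv, ← hcv]; field_simp
  have hcoth_D : coth x - y * coth (x*y) = (cv*su - y*cu*sv)/(sv*su) := by
    simp only [coth, ← hu, ← hsu, ← hcu, ← hsv, ← hcv]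
    field_simp
  rw [hcoth_u, hcoth_v, hcoth_D]
  have hLHS : ((u*cu - su)/su * ((x*cv - sv)/sv)) / ((cv*su - y*cu*sv)/(sv*su))
      = ((u*cu - su)*(x*cv - sv)) / (cv*su - y*cu*sv) := by
    field_simp
  rw [hLHS]
  have hy2 : 0 < 1 - y^2 := by nlinarith
  -- step 1 : LHS ≤ x^3 y^2 / (3 (1-y^2))
  have hstep1 : ((u*cu - su)*(x*cv - sv)) / (cv*su - y*cu*sv) ≤ x^3*y^2/(3*(1 - y^2)) := by
    rw [div_le_div_iff₀ hE (by positivity)]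
    have hx2 : (0:ℝ) < x^2 := by positivity
    apply le_of_mul_le_mul_left _ hx2
    calc x^2 * ((u*cu - su)*(x*cv - sv) * (3*(1 - y^2)))
        = 3*(x^2 - u^2)*((u*cu - su)*(x*cv - sv)) := by simp only [hu]; ring
      _ ≤ x*(cv*su - y*cu*sv)*(u^2*x^2) := hcross
      _ = x^2 * (x^3*y^2*(cv*su - y*cu*sv)) := by simp only [hu]; ring
  -- step 2 : x^3 y^2/(3(1-y^2)) < RHS
  have hstep2 : x^3*y^2/(3*(1 - y^2)) < (y ^ 2 / (4 * (1 - y ^ 2))) * (Real.sinh (2 * x) - 2 * x) := by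
    have hs := CothAux.sinh_cubic (2*x) (by positivity)
    have e : (2*x) + (2*x)^3/6 = 2*x + 4*x^3/3 := by ring
    have h4 : 4*x^3/3 < Real.sinh (2*x) - 2*x := by linarith [e ▸ hs]
    rw [div_lt_iff₀ (by positivity : (0:ℝ) < 3*(1 - y^2))]
    have h5 : (y ^ 2 / (4 * (1 - y ^ 2))) * (Real.sinh (2 * x) - 2 * x) * (3 * (1 - y ^ 2))
        = (3*y^2/4) * (Real.sinh (2*x) - 2*x) := by
      field_simp
    rw [h5]
    calc x^3*y^2 = (3*y^2/4)*(4*x^3/3) := by ring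
      _ < (3*y^2/4)*(Real.sinh (2*x) - 2*x) := by
          exact mul_lt_mul_of_pos_left h4 (by positivity)
  exact lt_of_le_of_lt hstep1 hstep2
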